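/- Let r ≥ 1 and let ℓ be a natural number with ℓ ≥ r + 1 and gcd(ℓ, r + 1) = 1. Then (r + 1) times the number of tuples a : Fin r → ℕ satisfying both ∑_{i=1}^{r} a_i ≤ ℓ - r - 1 and ∑_{i=1}^{r} i · a_i ≡ 0 (mod r + 1) equals the binomial coefficient C(ℓ-1, r). In particular the number of such tuples is exactly 1/(r+1) times the total number of tuples a : Fin r → ℕ with ∑_i a_i ≤ ℓ - r - 1. (This is the combinatorial content of the paper's Remark: for g of Lie type A_r with gcd(ℓ, r+1) = 1, the simple objects labeled by integer weights — those λ = ∑ a_i λ_i with ∑ i·a_i ≡ 0 mod (r+1) — form a modular subcategory whose rank is 1/(r+1) times the rank of the full category.) -/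

import Mathlib

open Finset

private lemma multiset_card_finsetSum {α β : Type*} (s : Finset β) (g : β → Multiset α) :
    Multiset.card (∑ i ∈ s, g i) = ∑ i ∈ s, Multiset.card (g i) := by
  classical
  induction s using Finset.induction with
  | empty => simp
  | insert _ _ h ih => simp [Finset.sum_insert h, ih]

private lemma count_sum_nsmul {N : ℕ} (f : Fin N → ℕ) (j : Fin N) :
    Multiset.count j (∑ i, f i • ({i} : Multiset (Fin N))) = f j := by
  rw [Multiset.count_sum']
  simp [Multiset.count_singleton, eq_comm]

/-- Stars and bars for `antidiagonalTuple`. -/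
private lemma card_antidiagonalTuple (N m : ℕ) :
    (Finset.Nat.antidiagonalTuple N m).card = (N + m - 1).choose m := by
  rw [← Fintype.card_coe]
  have h := Sym.card_sym_eq_choose (α := Fin N) m
  rw [Fintype.card_fin] at h
  rw [← h]
  refine Fintype.card_congr ?_
  refine
    { toFun := fun b => ⟨∑ i, (b : Fin N → ℕ) i • ({i} : Multiset (Fin N)), ?_⟩
      invFun := fun s => ⟨fun i => s.1.count i, ?_⟩
      left_inv := ?_, right_inv := ?_ }
  · have hb := Finset.Nat.mem_antidiagonalTuple.mp b.2
    simp [multiset_card_finsetSum, hb]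
  · rw [Finset.Nat.mem_antidiagonalTuple]
    have : ∑ i, (fun i => s.1.count i) i • ({i} : Multiset (Fin N)) = s.1 := by
      ext j
      rw [count_sum_nsmul]
    calc ∑ i, s.1.count i = Multiset.card (∑ i, (fun i => s.1.count i) i • ({i} : Multiset (Fin N))) := by
          simp [multiset_card_finsetSum]
      _ = m := by rw [this, s.2]
  · intro b
    ext i
    exact count_sum_nsmul _ i
  · intro s
    ext j
    exact count_sum_nsmul (fun i => s.1.count i) j

theorem rank_A_r_integer_weights (r ℓ : ℕ) (hr : 1 ≤ r) (hℓ : r + 1 ≤ ℓ)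
    (hgcd : Nat.gcd ℓ (r + 1) = 1) :
    (r + 1) * Nat.card {a : Fin r → ℕ |
        (∑ i, a i ≤ ℓ - r - 1) ∧ (∑ i : Fin r, ((i : ℕ) + 1) * a i) % (r + 1) = 0}
      = (ℓ - 1).choose r := by
  obtain ⟨s, rfl⟩ : ∃ s, r = s + 1 := ⟨r - 1, by omega⟩
  set r := s + 1 with hrdef
  set m := ℓ - r - 1 with hm
  set N := r + 1 with hN
  haveI : NeZero N := ⟨by omega⟩
  set f : (Fin N → ℕ) → ZMod N := fun b => ((∑ i : Fin N, (i : ℕ) * b i : ℕ) : ZMod N) with hf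
  set T := Finset.Nat.antidiagonalTuple N m with hT
  -- translation of the divisibility condition through `Fin.cons`
  have hcons_sum : ∀ (x : ℕ) (a : Fin r → ℕ),
      ∑ i : Fin N, (i : ℕ) * (Fin.cons x a : Fin N → ℕ) i = ∑ i : Fin r, ((i : ℕ) + 1) * a i := by
    intro x a
    rw [Fin.sum_univ_succ]
    simp [Fin.val_succ]
  -- Step 1 : Nat.card of the set equals the card of the zero fiber
  have step1 : Nat.card {a : Fin r → ℕ |
        (∑ i, a i ≤ m) ∧ (∑ i : Fin r, ((i : ℕ) + 1) * a i) % N = 0}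
      = (T.filter fun b => f b = 0).card := by
    rw [← Nat.card_eq_finsetCard]
    refine Nat.card_congr ?_
    refine
      { toFun := fun a => ⟨Fin.cons (m - ∑ i, a.1 i) a.1, ?_⟩
        invFun := fun b => ⟨Fin.tail b.1, ?_⟩
        left_inv := ?_, right_inv := ?_ }
    · obtain ⟨ha1, ha2⟩ := a.2
      rw [Finset.mem_filter, Finset.Nat.mem_antidiagonalTuple]
      constructor
      · rw [Fin.sum_univ_succ]
        simp only [Fin.cons_zero, Fin.cons_succ]
        omega
      · simp only [hf]
        rw [hcons_sum, ZMod.natCast_eq_zero_iff]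
        exact Nat.dvd_of_mod_eq_zero ha2
    · obtain ⟨hb1, hb2⟩ := Finset.mem_filter.mp b.2
      rw [Finset.Nat.mem_antidiagonalTuple] at hb1
      rw [Fin.sum_univ_succ] at hb1
      constructor
      · simp only [Fin.tail]
        omega
      · have : (Fin.cons (b.1 0) (Fin.tail b.1) : Fin N → ℕ) = b.1 := Fin.cons_self_tail b.1
        have h2 := hcons_sum (b.1 0) (Fin.tail b.1)
        rw [this] at h2
        rw [← h2]
        simp only [hf] at hb2
        rw [ZMod.natCast_eq_zero_iff] at hb2
        obtain ⟨k, hk⟩ := hb2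
        simp [hk, Nat.mul_mod_right]
    · intro a
      ext i
      simp [Fin.tail_cons]
    · intro b
      obtain ⟨hb1, _⟩ := Finset.mem_filter.mp b.2
      rw [Finset.Nat.mem_antidiagonalTuple, Fin.sum_univ_succ] at hb1
      ext i
      have hx : m - ∑ i, Fin.tail b.1 i = b.1 0 := by
        simp only [Fin.tail]
        omega
      rw [Subtype.coe_mk, hx, Fin.cons_self_tail]
  -- rotation lemma
  have hrotmem : ∀ b, b ∈ T → (fun i => b (i + 1)) ∈ T := by
    intro b hb
    rw [Finset.Nat.mem_antidiagonalTuple] at hb ⊢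
    rw [← hb]
    exact Equiv.sum_comp (Equiv.addRight (1 : Fin N)) b
  have hrotval : ∀ b, b ∈ T → f (fun i => b (i + 1)) = f b - (m : ZMod N) := by
    intro b hb
    rw [Finset.Nat.mem_antidiagonalTuple] at hb
    have key : f b = f (fun i => b (i + 1)) + (m : ZMod N) := by
      have h1 : f b = ∑ i : Fin N, (((i : ℕ) : ZMod N) * (b i : ZMod N)) := by
        simp only [hf]; push_cast; rfl
      have h2 : ∑ i : Fin N, (((i : ℕ) : ZMod N) * (b i : ZMod N))
          = ∑ i : Fin N, ((((i + 1 : Fin N) : ℕ) : ZMod N) * (b (i + 1) : ZMod N)) :=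
        (Equiv.sum_comp (Equiv.addRight (1 : Fin N))
          (fun i : Fin N => ((i : ℕ) : ZMod N) * (b i : ZMod N))).symm
      have h3 : ∀ i : Fin N, (((i + 1 : Fin N) : ℕ) : ZMod N) = ((i : ℕ) : ZMod N) + 1 := by
        intro i
        have : ((i + 1 : Fin N) : ℕ) = ((i : ℕ) + 1) % N := by
          rw [Fin.val_add]
          congr 1
        rw [this, ZMod.natCast_mod]
        push_cast
        ring
      rw [h1, h2]
      have h4 : ∑ i : Fin N, ((b (i + 1) : ℕ) : ZMod N) = (m : ZMod N) := by
        rw [← Nat.cast_sum]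
        congr 1
        rw [← hb]
        exact Equiv.sum_comp (Equiv.addRight (1 : Fin N)) b
      calc ∑ i : Fin N, ((((i + 1 : Fin N) : ℕ) : ZMod N) * (b (i + 1) : ZMod N))
          = ∑ i : Fin N, ((((i : ℕ)) : ZMod N) * (b (i + 1) : ZMod N)
              + ((b (i + 1) : ℕ) : ZMod N)) := by
            refine Finset.sum_congr rfl fun i _ => ?_
            rw [h3 i]; ring
        _ = f (fun i => b (i + 1)) + (m : ZMod N) := by
            rw [Finset.sum_add_distrib, h4]
            congr 1
            simp only [hf]; push_cast; rfl
    rw [key]; ring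
  -- fiber cardinalities
  set g : ZMod N → ℕ := fun c => (T.filter fun b => f b = c).card with hg
  have hfiber : ∀ c : ZMod N, g c = g (c - (m : ZMod N)) := by
    intro c
    refine Finset.card_bij' (fun b _ => fun i => b (i + 1))
      (fun b _ => fun i => b (i - 1)) ?_ ?_ ?_ ?_
    · intro b hb
      obtain ⟨hb1, hb2⟩ := Finset.mem_filter.mp hb
      exact Finset.mem_filter.mpr ⟨hrotmem b hb1, by rw [hrotval b hb1, hb2]⟩
    · intro b hb
      obtain ⟨hb1, hb2⟩ := Finset.mem_filter.mp hb
      have hmem : (fun i => b (i - 1)) ∈ T := by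
        rw [Finset.Nat.mem_antidiagonalTuple] at hb1 ⊢
        rw [← hb1]
        exact Equiv.sum_comp (Equiv.subRight (1 : Fin N)) b
      refine Finset.mem_filter.mpr ⟨hmem, ?_⟩
      have hthis := hrotval _ hmem
      have hcomp : (fun i => (fun j : Fin N => b (j - 1)) (i + 1)) = b := by
        funext i; simp
      rw [hcomp, hb2] at hthis
      exact (sub_left_inj.mp hthis.symm)
    · intro b _; funext i; simp
    · intro b _; funext i; simp
  clear hcons_sum
  clear_value N m r
  -- `m` is a unit mod `N`
  have hmcast : ((m : ℕ) : ZMod N) = ((ℓ : ℕ) : ZMod N) := by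
    have hmeq : (m : ℕ) = ℓ - N := by clear * - hm hN hrdef hℓ hr; omega
    rw [hmeq, Nat.cast_sub (by clear * - hm hN hrdef hℓ hr; omega : N ≤ ℓ), ZMod.natCast_self, sub_zero]
  have hunit : IsUnit ((m : ℕ) : ZMod N) := by
    rw [hmcast, ZMod.isUnit_iff_coprime]
    exact hgcd
  have hiter : ∀ k : ℕ, g 0 = g (0 - (k : ZMod N) * (m : ZMod N)) := by
    intro k
    induction k with
    | zero => simp
    | succ k ih =>
      rw [ih, hfiber]
      congr 1
      push_cast
      ring
  have hconst : ∀ c : ZMod N, g c = g 0 := by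
    intro c
    set k := ((0 - c) * (((m : ℕ) : ZMod N))⁻¹).val with hk
    have h1 : ((k : ℕ) : ZMod N) * ((m : ℕ) : ZMod N) = 0 - c := by
      rw [hk, ZMod.natCast_val, ZMod.cast_id, mul_assoc, ZMod.inv_mul_of_unit _ hunit, mul_one]
    have h2 := hiter k
    rw [h1] at h2
    simpa using h2.symm
  have hsum : T.card = ∑ c : ZMod N, g c :=
    Finset.card_eq_sum_card_fiberwise (fun b _ => Finset.mem_univ (f b))
  have hNg : T.card = N * g 0 := by
    rw [hsum, Finset.sum_congr rfl fun c _ => hconst c, Finset.sum_const, smul_eq_mul,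
      Finset.card_univ, ZMod.card]
  have hTcard : T.card = (ℓ - 1).choose r := by
    rw [hT, card_antidiagonalTuple]
    have h1 : N + m - 1 = ℓ - 1 := by clear * - hm hN hrdef hℓ hr; omega
    have h2 : m = (ℓ - 1) - r := by clear * - hm hN hrdef hℓ hr; omega
    rw [h1, h2, Nat.choose_symm (by clear * - hm hN hrdef hℓ hr; omega)]
  rw [step1]
  have h0 : (T.filter fun b => f b = 0).card = g 0 := rfl
  rw [h0, ← hNg]
  exact hTcard
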